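/- For the block magnetization chain of the multi-component Ising model: (i) if β < β_cr, then for every starting value s and every t ≥ 0, Σ_{i=1}^m Var_s(S_t^{(i)}) ≤ 8 α m a_max² / (a_min² n) and Var_s(‖S_t‖₁) ≤ 8 α m² a_max² / (a_min² n); (ii) if β = β_cr, then for every starting value s and every t ≥ 0, Var_s(‖S_t‖₁) ≤ 4 m² a_max² t / (a_min² n²). -/

import Mathlib

open Finset MeasureTheory Real Filter

namespace MultiIsing

/-- The real spin value attached to a Boolean spin. -/
def spin (b : Bool) : ℝ := if b then 1 else -1

/-- `r₊(s) = e^{βs}/(e^{βs}+e^{-βs})`. -/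
noncomputable def rp (β s : ℝ) : ℝ :=
  Real.exp (β * s) / (Real.exp (β * s) + Real.exp (-(β * s)))

/-- `r₋(s) = e^{-βs}/(e^{βs}+e^{-βs})`. -/
noncomputable def rm (β s : ℝ) : ℝ :=
  Real.exp (-(β * s)) / (Real.exp (β * s) + Real.exp (-(β * s)))

variable {m : ℕ}

/-- `g : Fin n → Fin m` realizes the partition of `n` vertices into groups
of sizes `n * p i`. -/
def IsPartition (n : ℕ) (p : Fin m → ℝ) (g : Fin n → Fin m) : Prop :=
  0 < n ∧ ∀ i, ((Finset.univ.filter fun v => g v = i).card : ℝ) = n * p i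

/-- Standing hypotheses on the parameters of the multi-component Ising model. -/
structure Params (m : ℕ) (p : Fin m → ℝ) (k : Fin m → Fin m → ℝ) : Prop where
  hm : 0 < m
  hp : ∀ i, 0 < p i
  hpsum : ∑ i, p i = 1
  hkpos : ∀ i j, 0 < k i j
  hksymm : ∀ i j, k i j = k j i

/-- `a` is the (normalized, positive) Perron–Frobenius left eigenvector of the
matrix `B = (p i * k i j)`; its eigenvalue is then necessarily
`∑ i j, a i * p i * k i j`. -/
structure PFvec (m : ℕ) (p : Fin m → ℝ) (k : Fin m → Fin m → ℝ) (a : Fin m → ℝ) : Prop where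
  hpos : ∀ i, 0 < a i
  hsum : ∑ i, a i = 1
  heig : ∀ j, ∑ i, a i * (p i * k i j) = (∑ i, ∑ j, a i * (p i * k i j)) * a j

/-- The critical inverse temperature `β_cr = 1 / (∑ i j, a i * p i * k i j)`. -/
noncomputable def betaCr (p : Fin m → ℝ) (k : Fin m → Fin m → ℝ) (a : Fin m → ℝ) : ℝ :=
  1 / (∑ i, ∑ j, a i * (p i * k i j))

/-- The mean field `S^v = ∑_{w ≠ v} K(v,w) σ(w)` at vertex `v`. -/
noncomputable def meanField (n : ℕ) (k : Fin m → Fin m → ℝ) (g : Fin n → Fin m)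
    (σ : Fin n → Bool) (v : Fin n) : ℝ :=
  ∑ w ∈ Finset.univ.filter (fun w => w ≠ v), (k (g v) (g w) / n) * spin (σ w)

/-- One-step transition probabilities of the Glauber dynamics: a uniformly chosen
vertex is refreshed to `±1` with probabilities `r±(S^v)`. -/
noncomputable def glauber (n : ℕ) (β : ℝ) (k : Fin m → Fin m → ℝ) (g : Fin n → Fin m)
    (σ σ' : Fin n → Bool) : ℝ :=
  (1 / n) * ∑ v,
    ((if σ' = Function.update σ v true then rp β (meanField n k g σ v) else 0)
      + (if σ' = Function.update σ v false then rm β (meanField n k g σ v) else 0))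

/-- `t`-step transition probabilities of a transition kernel on a finite state space. -/
noncomputable def iter {Ω : Type*} [Fintype Ω] [DecidableEq Ω] (P : Ω → Ω → ℝ) :
    ℕ → Ω → Ω → ℝ
  | 0 => fun x y => if x = y then 1 else 0
  | (t + 1) => fun x y => ∑ z, iter P t x z * P z y

/-- The Gibbs measure `μ_n(σ) ∝ exp(β ∑_{unordered pairs v ≠ w} K(v,w) σ(v) σ(w))`. -/
noncomputable def gibbs (n : ℕ) (β : ℝ) (k : Fin m → Fin m → ℝ) (g : Fin n → Fin m)
    (σ : Fin n → Bool) : ℝ :=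
  Real.exp (β * ((1 / 2) * ∑ v, ∑ w ∈ Finset.univ.filter (fun w => w ≠ v),
      (k (g v) (g w) / n) * spin (σ v) * spin (σ w))) /
    ∑ σ' : Fin n → Bool, Real.exp (β * ((1 / 2) * ∑ v, ∑ w ∈ Finset.univ.filter (fun w => w ≠ v),
      (k (g v) (g w) / n) * spin (σ' v) * spin (σ' w)))

/-- The total-variation distance between two distributions on a finite space. -/
noncomputable def tvDist {Ω : Type*} [Fintype Ω] (μ ν : Ω → ℝ) : ℝ :=
  (1 / 2) * ∑ x, |μ x - ν x|

/-- The worst-case total-variation distance to stationarity after `t` steps. -/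
noncomputable def dn (n : ℕ) (β : ℝ) (k : Fin m → Fin m → ℝ) (g : Fin n → Fin m)
    (t : ℕ) : ℝ :=
  ⨆ σ : Fin n → Bool, tvDist (fun σ' => iter (glauber n β k g) t σ σ') (gibbs n β k g)

/-- The total-variation mixing time `t_mix = min {t : d_n(t) ≤ 1/4}`. -/
noncomputable def tmix (n : ℕ) (β : ℝ) (k : Fin m → Fin m → ℝ) (g : Fin n → Fin m) : ℕ :=
  sInf {t : ℕ | dn n β k g t ≤ 1 / 4}

/-- The normalized block magnetization `S^{(i)}(σ) = (1/n) ∑_{v ∈ G_i} σ(v)`. -/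
noncomputable def Smag (n : ℕ) (g : Fin n → Fin m) (σ : Fin n → Bool) (i : Fin m) : ℝ :=
  (1 / n) * ∑ v ∈ Finset.univ.filter (fun v => g v = i), spin (σ v)

/-- The unnormalized block magnetization `M^{(i)}(σ) = ∑_{v ∈ G_i} σ(v)`. -/
noncomputable def Mvec (n : ℕ) (g : Fin n → Fin m) (σ : Fin n → Bool) (i : Fin m) : ℝ :=
  ∑ v ∈ Finset.univ.filter (fun v => g v = i), spin (σ v)

/-- The `i`-th block Hamming distance between two configurations. -/
noncomputable def blockDist (n : ℕ) (g : Fin n → Fin m) (σ σ' : Fin n → Bool) (i : Fin m) : ℝ :=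
  (1 / 2) * ∑ v ∈ Finset.univ.filter (fun v => g v = i), |spin (σ v) - spin (σ' v)|

/-- The matrix `Q = (1 - 1/n) I + (β/n) B` where `B = (p i * k i j)`. -/
noncomputable def Qmat (n : ℕ) (β : ℝ) (p : Fin m → ℝ) (k : Fin m → Fin m → ℝ) :
    Matrix (Fin m) (Fin m) ℝ :=
  (1 - 1 / (n : ℝ)) • (1 : Matrix (Fin m) (Fin m) ℝ) +
    (β / n) • Matrix.of (fun i j => p i * k i j)

/-- `μ` is the law of the Markov chain with transition probabilities `P`
started at `x0`, as a measure on path space. -/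
def IsPathMeasure {Ω : Type*} [Fintype Ω] [DecidableEq Ω] [MeasurableSpace Ω]
    (P : Ω → Ω → ℝ) (x0 : Ω) (μ : Measure (ℕ → Ω)) : Prop :=
  IsProbabilityMeasure μ ∧
    ∀ t : ℕ, ∀ f : ℕ → Ω,
      (μ {ω | ∀ s ≤ t, ω s = f s}).toReal =
        (if f 0 = x0 then ∏ s ∈ Finset.range t, P (f s) (f (s + 1)) else 0)

/-- `μ` is a coupling of two copies of the Markov chain with transition
probabilities `P`, started at `x0` and `y0` respectively. -/
def IsCoupling {Ω : Type*} [Fintype Ω] [DecidableEq Ω] [MeasurableSpace Ω]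
    (P : Ω → Ω → ℝ) (x0 y0 : Ω) (μ : Measure (ℕ → Ω × Ω)) : Prop :=
  IsProbabilityMeasure μ ∧
    (∀ t : ℕ, ∀ f : ℕ → Ω,
      (μ {ω | ∀ s ≤ t, (ω s).1 = f s}).toReal =
        (if f 0 = x0 then ∏ s ∈ Finset.range t, P (f s) (f (s + 1)) else 0)) ∧
    (∀ t : ℕ, ∀ f : ℕ → Ω,
      (μ {ω | ∀ s ≤ t, (ω s).2 = f s}).toReal =
        (if f 0 = y0 then ∏ s ∈ Finset.range t, P (f s) (f (s + 1)) else 0))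


/-- The expectation `E_σ[f(σ_t)]` for the Glauber dynamics started at `σ`. -/
noncomputable def Ef (n : ℕ) (β : ℝ) {m : ℕ} (k : Fin m → Fin m → ℝ) (g : Fin n → Fin m)
    (σ : Fin n → Bool) (t : ℕ) (f : (Fin n → Bool) → ℝ) : ℝ :=
  ∑ σ' : Fin n → Bool, iter (glauber n β k g) t σ σ' * f σ'

/-- The variance `Var_σ(f(σ_t))` for the Glauber dynamics started at `σ`. -/
noncomputable def Varf (n : ℕ) (β : ℝ) {m : ℕ} (k : Fin m → Fin m → ℝ) (g : Fin n → Fin m)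
    (σ : Fin n → Bool) (t : ℕ) (f : (Fin n → Bool) → ℝ) : ℝ :=
  Ef n β k g σ t (fun τ => (f τ) ^ 2) - (Ef n β k g σ t f) ^ 2

lemma denom_pos (x : ℝ) : 0 < Real.exp x + Real.exp (-x) := by positivity

lemma rp_nonneg (β s : ℝ) : 0 ≤ rp β s := by
  unfold rp; positivity

lemma rm_nonneg (β s : ℝ) : 0 ≤ rm β s := by
  unfold rm; positivity

lemma rp_add_rm (β s : ℝ) : rp β s + rm β s = 1 := by
  unfold rp rm
  rw [← add_div, div_self (denom_pos (β * s)).ne']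

lemma rp_le_one (β s : ℝ) : rp β s ≤ 1 := by
  have := rp_add_rm β s
  have := rm_nonneg β s
  linarith

lemma rm_le_one (β s : ℝ) : rm β s ≤ 1 := by
  have := rp_add_rm β s
  have := rp_nonneg β s
  linarith

/-- sigmoid form of rp -/
lemma rp_eq (β s : ℝ) : rp β s = (1 + Real.exp (-(2 * β * s)))⁻¹ := by
  unfold rp
  rw [div_eq_iff (denom_pos (β * s)).ne', inv_eq_one_div, div_mul_eq_mul_div,
    one_mul, eq_div_iff (by positivity)]
  ring_nf
  rw [← Real.exp_add]
  ring_nf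

lemma sigmoid_hasDeriv (x : ℝ) :
    HasDerivAt (fun u : ℝ => (1 + Real.exp u)⁻¹)
      (-(Real.exp x) / (1 + Real.exp x) ^ 2) x := by
  have h1 : HasDerivAt (fun u : ℝ => 1 + Real.exp u) (Real.exp x) x :=
    (Real.hasDerivAt_exp x).const_add 1
  exact h1.inv (by positivity)

lemma sigmoid_lip (x y : ℝ) :
    |(1 + Real.exp x)⁻¹ - (1 + Real.exp y)⁻¹| ≤ (1 / 4) * |x - y| := by
  have hdiff : ∀ z ∈ (Set.univ : Set ℝ),
      DifferentiableAt ℝ (fun u : ℝ => (1 + Real.exp u)⁻¹) z :=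
    fun z _ => (sigmoid_hasDeriv z).differentiableAt
  have hbound : ∀ z ∈ (Set.univ : Set ℝ),
      ‖deriv (fun u : ℝ => (1 + Real.exp u)⁻¹) z‖ ≤ 1 / 4 := by
    intro z _
    rw [(sigmoid_hasDeriv z).deriv]
    rw [Real.norm_eq_abs, abs_div, abs_neg, abs_of_pos (Real.exp_pos z),
      abs_of_pos (by positivity : (0:ℝ) < (1 + Real.exp z) ^ 2)]
    rw [div_le_div_iff₀ (by positivity) (by norm_num)]
    nlinarith [Real.exp_pos z, sq_nonneg (1 - Real.exp z)]
  have := Convex.norm_image_sub_le_of_norm_deriv_le hdiff hbound convex_univ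
    (Set.mem_univ y) (Set.mem_univ x)
  simpa [Real.norm_eq_abs] using this

lemma rp_lip (β s t : ℝ) (hβ : 0 ≤ β) : |rp β s - rp β t| ≤ (β / 2) * |s - t| := by
  rw [rp_eq, rp_eq]
  have := sigmoid_lip (-(2 * β * s)) (-(2 * β * t))
  have h2 : |(-(2 * β * s)) - (-(2 * β * t))| = 2 * β * |s - t| := by
    rw [show (-(2 * β * s)) - (-(2 * β * t)) = (2*β) * (t - s) by ring, abs_mul,
      abs_of_nonneg (by positivity : (0:ℝ) ≤ 2*β), abs_sub_comm]
  rw [h2] at this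
  linarith [this]

variable {m : ℕ}

/-- The Markov operator of the Glauber dynamics. -/
noncomputable def T (n : ℕ) (β : ℝ) (k : Fin m → Fin m → ℝ) (g : Fin n → Fin m)
    (f : (Fin n → Bool) → ℝ) (σ : Fin n → Bool) : ℝ :=
  ∑ τ : Fin n → Bool, glauber n β k g σ τ * f τ

lemma glauber_nonneg (n : ℕ) (β : ℝ) (k : Fin m → Fin m → ℝ) (g : Fin n → Fin m)
    (σ τ : Fin n → Bool) : 0 ≤ glauber n β k g σ τ := by
  unfold glauber
  apply mul_nonneg (by positivity)
  apply Finset.sum_nonneg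
  intro v _
  apply add_nonneg <;> split <;> simp [rp_nonneg, rm_nonneg, le_refl]

lemma T_apply (n : ℕ) (β : ℝ) (k : Fin m → Fin m → ℝ) (g : Fin n → Fin m)
    (f : (Fin n → Bool) → ℝ) (σ : Fin n → Bool) :
    T n β k g f σ = (1 / n) * ∑ v : Fin n,
      (rp β (meanField n k g σ v) * f (Function.update σ v true)
        + rm β (meanField n k g σ v) * f (Function.update σ v false)) := by
  unfold T glauber
  have step : ∀ τ : Fin n → Bool,
      ((1 / (n:ℝ)) * ∑ v : Fin n,
        ((if τ = Function.update σ v true then rp β (meanField n k g σ v) else 0)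
          + (if τ = Function.update σ v false then rm β (meanField n k g σ v) else 0))) * f τ
      = (1 / n) * ∑ v : Fin n,
        ((if τ = Function.update σ v true then rp β (meanField n k g σ v) * f τ else 0)
          + (if τ = Function.update σ v false then rm β (meanField n k g σ v) * f τ else 0)) := by
    intro τ
    rw [mul_assoc, Finset.sum_mul]
    congr 1
    refine Finset.sum_congr rfl fun v _ => ?_
    simp [add_mul, ite_mul]
  simp only [step, ← Finset.mul_sum]
  congr 1
  rw [Finset.sum_comm]
  refine Finset.sum_congr rfl fun v _ => ?_
  rw [Finset.sum_add_distrib]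
  congr 1
  · rw [Finset.sum_ite_eq' (Finset.univ : Finset (Fin n → Bool)) (Function.update σ v true)
      (fun τ => rp β (meanField n k g σ v) * f τ)]
    simp
  · rw [Finset.sum_ite_eq' (Finset.univ : Finset (Fin n → Bool)) (Function.update σ v false)
      (fun τ => rm β (meanField n k g σ v) * f τ)]
    simp

lemma T_rowsum (n : ℕ) (hn : 0 < n) (β : ℝ) (k : Fin m → Fin m → ℝ) (g : Fin n → Fin m)
    (σ : Fin n → Bool) : T n β k g (fun _ => (1:ℝ)) σ = 1 := by
  rw [T_apply]
  simp only [rp_add_rm, mul_one]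
  rw [Finset.sum_const, Finset.card_univ, Fintype.card_fin, nsmul_eq_mul, mul_one]
  field_simp

lemma Ef_zero (n : ℕ) (β : ℝ) (k : Fin m → Fin m → ℝ) (g : Fin n → Fin m)
    (σ : Fin n → Bool) (f : (Fin n → Bool) → ℝ) : Ef n β k g σ 0 f = f σ := by
  unfold Ef iter
  simp [Finset.sum_ite_eq]

lemma Ef_succ (n : ℕ) (β : ℝ) (k : Fin m → Fin m → ℝ) (g : Fin n → Fin m)
    (σ : Fin n → Bool) (t : ℕ) (f : (Fin n → Bool) → ℝ) :
    Ef n β k g σ (t + 1) f = Ef n β k g σ t (T n β k g f) := by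
  unfold Ef T
  show ∑ σ', (∑ z, iter (glauber n β k g) t σ z * glauber n β k g z σ') * f σ' = _
  simp only [Finset.sum_mul]
  rw [Finset.sum_comm]
  refine Finset.sum_congr rfl fun z _ => ?_
  rw [Finset.mul_sum]
  exact Finset.sum_congr rfl fun σ' _ => by ring

lemma iter_nonneg (n : ℕ) (β : ℝ) (k : Fin m → Fin m → ℝ) (g : Fin n → Fin m)
    (t : ℕ) (σ τ : Fin n → Bool) : 0 ≤ iter (glauber n β k g) t σ τ := by
  induction t generalizing τ with
  | zero => unfold iter; split <;> norm_num
  | succ t ih =>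
    unfold iter
    exact Finset.sum_nonneg fun z _ => mul_nonneg (ih z) (glauber_nonneg n β k g z τ)

lemma Ef_const (n : ℕ) (hn : 0 < n) (β : ℝ) (k : Fin m → Fin m → ℝ) (g : Fin n → Fin m)
    (σ : Fin n → Bool) (t : ℕ) (C : ℝ) : Ef n β k g σ t (fun _ => C) = C := by
  induction t generalizing C with
  | zero => rw [Ef_zero]
  | succ t ih =>
    rw [Ef_succ]
    have : T n β k g (fun _ => C) = fun _ => C := by
      funext σ'
      have h1 := T_rowsum n hn β k g σ'
      unfold T at h1 ⊢
      calc ∑ τ, glauber n β k g σ' τ * C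
          = C * ∑ τ, glauber n β k g σ' τ * 1 := by
            rw [Finset.mul_sum]; exact Finset.sum_congr rfl fun τ _ => by ring
        _ = C := by rw [h1, mul_one]
    rw [this, ih]

lemma Ef_mono (n : ℕ) (β : ℝ) (k : Fin m → Fin m → ℝ) (g : Fin n → Fin m)
    (σ : Fin n → Bool) (t : ℕ) {f₁ f₂ : (Fin n → Bool) → ℝ} (h : ∀ τ, f₁ τ ≤ f₂ τ) :
    Ef n β k g σ t f₁ ≤ Ef n β k g σ t f₂ :=
  Finset.sum_le_sum fun τ _ =>
    mul_le_mul_of_nonneg_left (h τ) (iter_nonneg n β k g t σ τ)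

lemma Ef_le_of_le (n : ℕ) (hn : 0 < n) (β : ℝ) (k : Fin m → Fin m → ℝ) (g : Fin n → Fin m)
    (σ : Fin n → Bool) (t : ℕ) {f : (Fin n → Bool) → ℝ} {C : ℝ} (h : ∀ τ, f τ ≤ C) :
    Ef n β k g σ t f ≤ C := by
  have := Ef_mono n β k g σ t (f₂ := fun _ => C) h
  rwa [Ef_const n hn β k g σ t C] at this

/-- Variance decomposition: one step peel-off. -/
lemma Varf_succ (n : ℕ) (β : ℝ) (k : Fin m → Fin m → ℝ) (g : Fin n → Fin m)
    (σ : Fin n → Bool) (t : ℕ) (f : (Fin n → Bool) → ℝ) :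
    Varf n β k g σ (t + 1) f = Varf n β k g σ t (T n β k g f)
      + Ef n β k g σ t (fun τ => T n β k g (fun x => f x ^ 2) τ - (T n β k g f τ) ^ 2) := by
  unfold Varf
  rw [Ef_succ, Ef_succ]
  have : Ef n β k g σ t (fun τ => T n β k g (fun x => f x ^ 2) τ - (T n β k g f τ) ^ 2)
      = Ef n β k g σ t (T n β k g (fun x => f x ^ 2))
        - Ef n β k g σ t (fun τ => (T n β k g f τ) ^ 2) := by
    unfold Ef
    rw [← Finset.sum_sub_distrib]
    exact Finset.sum_congr rfl fun τ _ => by ring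
  rw [this]
  ring

/-- One-step variance bound from an update-Lipschitz estimate. -/
lemma onestep_var (n : ℕ) (hn : 0 < n) (β : ℝ) (k : Fin m → Fin m → ℝ) (g : Fin n → Fin m)
    (f : (Fin n → Bool) → ℝ) (σ : Fin n → Bool) (d : ℝ)
    (hLip : ∀ v b, |f (Function.update σ v b) - f σ| ≤ d) :
    T n β k g (fun x => f x ^ 2) σ - (T n β k g f σ) ^ 2 ≤ d ^ 2 := by
  have hd : 0 ≤ d := le_trans (abs_nonneg _) (hLip ⟨0, hn⟩ true)
  have key : T n β k g (fun x => (f x - f σ) ^ 2) σ ≤ d ^ 2 := by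
    rw [T_apply]
    have hb : ∀ v : Fin n,
        rp β (meanField n k g σ v) * (f (Function.update σ v true) - f σ) ^ 2
          + rm β (meanField n k g σ v) * (f (Function.update σ v false) - f σ) ^ 2
        ≤ d ^ 2 := by
      intro v
      have h1 : (f (Function.update σ v true) - f σ) ^ 2 ≤ d ^ 2 := by
        have := hLip v true
        nlinarith [abs_nonneg (f (Function.update σ v true) - f σ),
          sq_abs (f (Function.update σ v true) - f σ)]
      have h2 : (f (Function.update σ v false) - f σ) ^ 2 ≤ d ^ 2 := by
        have := hLip v false
        nlinarith [abs_nonneg (f (Function.update σ v false) - f σ),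
          sq_abs (f (Function.update σ v false) - f σ)]
      have := rp_add_rm β (meanField n k g σ v)
      nlinarith [rp_nonneg β (meanField n k g σ v), rm_nonneg β (meanField n k g σ v),
        sq_nonneg (f (Function.update σ v true) - f σ),
        sq_nonneg (f (Function.update σ v false) - f σ)]
    calc (1 / (n:ℝ)) * ∑ v, (rp β (meanField n k g σ v) * (f (Function.update σ v true) - f σ) ^ 2
          + rm β (meanField n k g σ v) * (f (Function.update σ v false) - f σ) ^ 2)
        ≤ (1 / (n:ℝ)) * ∑ _v : Fin n, d ^ 2 := by
          apply mul_le_mul_of_nonneg_left _ (by positivity)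
          exact Finset.sum_le_sum fun v _ => hb v
      _ = d ^ 2 := by
          rw [Finset.sum_const, Finset.card_univ, Fintype.card_fin, nsmul_eq_mul]
          field_simp
  have expand : T n β k g (fun x => (f x - f σ) ^ 2) σ
      = T n β k g (fun x => f x ^ 2) σ - 2 * f σ * T n β k g f σ + f σ ^ 2 := by
    unfold T
    have h1 := T_rowsum n hn β k g σ
    unfold T at h1
    have : ∑ τ, glauber n β k g σ τ * (f τ - f σ) ^ 2
        = ∑ τ, (glauber n β k g σ τ * f τ ^ 2
            - 2 * f σ * (glauber n β k g σ τ * f τ) + f σ ^ 2 * (glauber n β k g σ τ * 1)) := by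
      exact Finset.sum_congr rfl fun τ _ => by ring
    rw [this, Finset.sum_add_distrib, Finset.sum_sub_distrib, ← Finset.mul_sum, ← Finset.mul_sum,
      h1, mul_one]
  nlinarith [sq_nonneg (T n β k g f σ - f σ), key, expand]
lemma spin_diff_le (x y : Bool) : |spin x - spin y| ≤ 2 := by
  cases x <;> cases y <;> simp [spin] <;> norm_num

/-- update-Lipschitz property with site-dependent constants `c * a (g v)`. -/
def LipA (n : ℕ) (g : Fin n → Fin m) (a : Fin m → ℝ) (f : (Fin n → Bool) → ℝ) (c : ℝ) : Prop :=
  ∀ (σ : Fin n → Bool) (v : Fin n) (b : Bool),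
    |f (Function.update σ v b) - f σ| ≤ c * a (g v)

lemma meanField_update_eq (n : ℕ) (k : Fin m → Fin m → ℝ) (g : Fin n → Fin m)
    (σ : Fin n → Bool) (w : Fin n) (b : Bool) :
    meanField n k g (Function.update σ w b) w = meanField n k g σ w := by
  unfold meanField
  refine Finset.sum_congr rfl fun w' hw' => ?_
  rw [Function.update_of_ne (Finset.mem_filter.mp hw').2]

lemma meanField_update_diff (n : ℕ) (k : Fin m → Fin m → ℝ) (g : Fin n → Fin m)
    (σ : Fin n → Bool) (w v : Fin n) (b : Bool) (hk : ∀ i j, 0 < k i j) (hvw : v ≠ w) :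
    |meanField n k g (Function.update σ w b) v - meanField n k g σ v|
      ≤ 2 * k (g v) (g w) / n := by
  unfold meanField
  rw [← Finset.sum_sub_distrib]
  have hmem : w ∈ Finset.univ.filter (fun w' => w' ≠ v) := by
    simp [Ne.symm hvw]
  rw [Finset.sum_eq_single_of_mem w hmem (fun w' _ hw'w => by
    rw [Function.update_of_ne hw'w]; ring)]
  rw [← mul_sub, abs_mul, Function.update_self]
  have hk0 := (hk (g v) (g w)).le
  have h1 : |k (g v) (g w) / (n:ℝ)| = k (g v) (g w) / n := by
    have hk0 := (hk (g v) (g w)).le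
    rw [abs_of_nonneg]; positivity
  rw [h1]
  calc k (g v) (g w) / (n:ℝ) * |spin b - spin (σ w)|
      ≤ k (g v) (g w) / n * 2 := by
        apply mul_le_mul_of_nonneg_left (spin_diff_le _ _)
        positivity
    _ = 2 * k (g v) (g w) / n := by ring
lemma fiber_sum (n : ℕ) (p : Fin m → ℝ) (k : Fin m → Fin m → ℝ) (a : Fin m → ℝ)
    (g : Fin n → Fin m) (lam : ℝ)
    (hgcard : ∀ i, ((Finset.univ.filter fun v => g v = i).card : ℝ) = n * p i)
    (heig : ∀ j, ∑ i, a i * (p i * k i j) = lam * a j) (j : Fin m) :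
    ∑ v : Fin n, k (g v) j * a (g v) = n * (lam * a j) := by
  have h1 : ∑ v : Fin n, k (g v) j * a (g v)
      = ∑ i, ∑ v ∈ Finset.univ.filter (fun v => g v = i), (k i j * a i) := by
    rw [Finset.sum_fiberwise' Finset.univ g (fun i => k i j * a i)]
  rw [h1]
  have h2 : ∀ i, ∑ v ∈ Finset.univ.filter (fun v => g v = i), (k i j * a i)
      = (n * p i) * (k i j * a i) := by
    intro i
    rw [Finset.sum_const, nsmul_eq_mul, hgcard i]
  simp only [h2]
  rw [← heig j, Finset.mul_sum]
  exact Finset.sum_congr rfl fun i _ => by ring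

/-- The key one-step contraction of the update-Lipschitz constant. -/
lemma lip_T (n : ℕ) (hn : 0 < n) (β : ℝ) (hβ0 : 0 ≤ β)
    (p : Fin m → ℝ) (k : Fin m → Fin m → ℝ) (a : Fin m → ℝ) (g : Fin n → Fin m) (lam : ℝ)
    (hk : ∀ i j, 0 < k i j) (hapos : ∀ i, 0 < a i) (hlam : 0 ≤ lam)
    (hgcard : ∀ i, ((Finset.univ.filter fun v => g v = i).card : ℝ) = n * p i)
    (heig : ∀ j, ∑ i, a i * (p i * k i j) = lam * a j)
    (f : (Fin n → Bool) → ℝ) (c : ℝ) (hc : 0 ≤ c) (hf : LipA n g a f c) :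
    LipA n g a (T n β k g f) ((((n : ℝ) - 1 + β * lam) / n) * c) := by
  intro σ w b
  set σ' := Function.update σ w b with hσ'
  rw [T_apply, T_apply, ← mul_sub, ← Finset.sum_sub_distrib]
  set A : (Fin n → Bool) → Fin n → ℝ := fun τ v =>
    rp β (meanField n k g τ v) * f (Function.update τ v true)
      + rm β (meanField n k g τ v) * f (Function.update τ v false) with hA
  have hbound : ∀ v : Fin n, |A σ' v - A σ v|
      ≤ (if v = w then 0 else c * a (g w))
        + (β * k (g v) (g w) / n) * (c * a (g v)) := by
    intro v
    by_cases hvw : v = w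
    · subst hvw
      have hmf : meanField n k g σ' v = meanField n k g σ v := meanField_update_eq n k g σ v b
      have hup : ∀ s : Bool, Function.update σ' v s = Function.update σ v s := fun s =>
        Function.update_idem b s σ
      simp only [hA, hmf, hup, if_pos rfl, sub_self, abs_zero, zero_add]
      have := (hk (g v) (g v)).le
      have := (hapos (g v)).le
      positivity
    · rw [if_neg hvw]
      set S := meanField n k g σ v
      set S' := meanField n k g σ' v
      have hS : |S' - S| ≤ 2 * k (g v) (g w) / n :=
        meanField_update_diff n k g σ w v b hk hvw
      have hrp : |rp β S' - rp β S| ≤ β * k (g v) (g w) / n := by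
        calc |rp β S' - rp β S| ≤ (β / 2) * |S' - S| := rp_lip β S' S hβ0
          _ ≤ (β / 2) * (2 * k (g v) (g w) / n) :=
            mul_le_mul_of_nonneg_left hS (by positivity)
          _ = β * k (g v) (g w) / n := by ring
      have hsum := rp_add_rm β S
      have hsum' := rp_add_rm β S'
      have identity : A σ' v - A σ v
          = rp β S' * (f (Function.update σ' v true) - f (Function.update σ v true))
            + rm β S' * (f (Function.update σ' v false) - f (Function.update σ v false))
            + (rp β S' - rp β S)
              * (f (Function.update σ v true) - f (Function.update σ v false)) := by
        simp only [hA]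
        linear_combination f (Function.update σ v false) * (hsum' - hsum)
      have hd1 : |f (Function.update σ' v true) - f (Function.update σ v true)|
          ≤ c * a (g w) := by
        have hcomm : Function.update σ' v true
            = Function.update (Function.update σ v true) w b := by
          rw [hσ', Function.update_comm hvw]
        rw [hcomm]
        exact hf (Function.update σ v true) w b
      have hd0 : |f (Function.update σ' v false) - f (Function.update σ v false)|
          ≤ c * a (g w) := by
        have hcomm : Function.update σ' v false
            = Function.update (Function.update σ v false) w b := by
          rw [hσ', Function.update_comm hvw]
        rw [hcomm]
        exact hf (Function.update σ v false) w b
      have hd10 : |f (Function.update σ v true) - f (Function.update σ v false)|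
          ≤ c * a (g v) := by
        have : Function.update σ v true
            = Function.update (Function.update σ v false) v true :=
          (Function.update_idem false true σ).symm
        rw [this]
        exact hf (Function.update σ v false) v true
      rw [identity]
      calc |rp β S' * (f (Function.update σ' v true) - f (Function.update σ v true))
            + rm β S' * (f (Function.update σ' v false) - f (Function.update σ v false))
            + (rp β S' - rp β S)
              * (f (Function.update σ v true) - f (Function.update σ v false))|
          ≤ |rp β S' * (f (Function.update σ' v true) - f (Function.update σ v true))
              + rm β S' * (f (Function.update σ' v false) - f (Function.update σ v false))|
            + |(rp β S' - rp β S)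
              * (f (Function.update σ v true) - f (Function.update σ v false))| :=
            abs_add_le _ _
        _ ≤ (|rp β S' * (f (Function.update σ' v true) - f (Function.update σ v true))|
              + |rm β S' * (f (Function.update σ' v false) - f (Function.update σ v false))|)
            + |(rp β S' - rp β S)
              * (f (Function.update σ v true) - f (Function.update σ v false))| :=
            add_le_add_left (abs_add_le _ _) _
        _ ≤ (rp β S' * (c * a (g w)) + rm β S' * (c * a (g w)))
            + (β * k (g v) (g w) / n) * (c * a (g v)) := by
            refine add_le_add (add_le_add ?_ ?_) ?_
            · rw [abs_mul, abs_of_nonneg (rp_nonneg β S')]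
              exact mul_le_mul_of_nonneg_left hd1 (rp_nonneg β S')
            · rw [abs_mul, abs_of_nonneg (rm_nonneg β S')]
              exact mul_le_mul_of_nonneg_left hd0 (rm_nonneg β S')
            · rw [abs_mul]
              have h0 : (0:ℝ) ≤ c * a (g v) := mul_nonneg hc (hapos (g v)).le
              exact mul_le_mul hrp hd10 (abs_nonneg _)
                (div_nonneg (mul_nonneg hβ0 (hk _ _).le) (Nat.cast_nonneg n))
        _ = c * a (g w) + (β * k (g v) (g w) / n) * (c * a (g v)) := by
            rw [← add_mul, hsum', one_mul]
  have habs : |∑ v : Fin n, (A σ' v - A σ v)|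
      ≤ ∑ v : Fin n, ((if v = w then 0 else c * a (g w))
          + (β * k (g v) (g w) / n) * (c * a (g v))) :=
    (Finset.abs_sum_le_sum_abs _ _).trans (Finset.sum_le_sum fun v _ => hbound v)
  have hsplit : ∑ v : Fin n, ((if v = w then 0 else c * a (g w))
        + (β * k (g v) (g w) / n) * (c * a (g v)))
      = ((n : ℝ) - 1) * (c * a (g w))
        + (β * c / n) * ∑ v : Fin n, k (g v) (g w) * a (g v) := by
    rw [Finset.sum_add_distrib]
    congr 1
    · have h1 : ∀ v : Fin n, (if v = w then (0:ℝ) else c * a (g w))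
          = c * a (g w) - (if v = w then c * a (g w) else 0) := by
        intro v; split <;> ring
      simp only [h1]
      rw [Finset.sum_sub_distrib, Finset.sum_const, Finset.card_univ, Fintype.card_fin,
        nsmul_eq_mul, Finset.sum_ite_eq' Finset.univ w (fun _ => c * a (g w)),
        if_pos (Finset.mem_univ w)]
      ring
    · rw [Finset.mul_sum]
      exact Finset.sum_congr rfl fun v _ => by ring
  rw [hsplit, fiber_sum n p k a g lam hgcard heig (g w)] at habs
  have hn' : (0:ℝ) < n := by exact_mod_cast hn
  calc |1 / (n:ℝ) * ∑ v : Fin n, (A σ' v - A σ v)|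
      = (1 / (n:ℝ)) * |∑ v : Fin n, (A σ' v - A σ v)| := by
        rw [abs_mul, abs_of_nonneg (by positivity : (0:ℝ) ≤ 1 / (n:ℝ))]
    _ ≤ (1 / (n:ℝ)) * (((n : ℝ) - 1) * (c * a (g w))
          + (β * c / n) * ((n:ℝ) * (lam * a (g w)))) :=
        mul_le_mul_of_nonneg_left habs (by positivity)
    _ = (((n : ℝ) - 1 + β * lam) / n) * c * a (g w) := by
        field_simp
/-- Iterated variance bound from the Lipschitz contraction. -/
lemma var_iter (n : ℕ) (hn : 0 < n) (β : ℝ) (hβ0 : 0 ≤ β)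
    (p : Fin m → ℝ) (k : Fin m → Fin m → ℝ) (a : Fin m → ℝ) (g : Fin n → Fin m) (lam : ℝ)
    (hk : ∀ i j, 0 < k i j) (hapos : ∀ i, 0 < a i) (hlam : 0 ≤ lam)
    (hgcard : ∀ i, ((Finset.univ.filter fun v => g v = i).card : ℝ) = n * p i)
    (heig : ∀ j, ∑ i, a i * (p i * k i j) = lam * a j)
    (amax : ℝ) (haM : ∀ i, a i ≤ amax) :
    ∀ (t : ℕ) (σ : Fin n → Bool) (f : (Fin n → Bool) → ℝ) (c : ℝ), 0 ≤ c → LipA n g a f c →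
      Varf n β k g σ t f
        ≤ ∑ s ∈ Finset.range t, ((((n:ℝ) - 1 + β * lam) / n) ^ s * c * amax) ^ 2 := by
  have hn' : (0:ℝ) < n := by exact_mod_cast hn
  have hn1 : (1:ℝ) ≤ n := by exact_mod_cast hn
  set ρ : ℝ := ((n:ℝ) - 1 + β * lam) / n with hρ
  have hρ0 : 0 ≤ ρ := by
    apply div_nonneg _ hn'.le
    nlinarith [mul_nonneg hβ0 hlam]
  have hamax0 : 0 ≤ amax := le_trans (hapos (g ⟨0, hn⟩)).le (haM _)
  intro t
  induction t with
  | zero =>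
    intro σ f c hc hf
    unfold Varf
    rw [Ef_zero, Ef_zero]
    simp
  | succ t ih =>
    intro σ f c hc hf
    rw [Varf_succ]
    have hfT := lip_T n hn β hβ0 p k a g lam hk hapos hlam hgcard heig f c hc hf
    have h1 := ih σ (T n β k g f) (ρ * c) (mul_nonneg hρ0 hc) hfT
    have h2 : Ef n β k g σ t
        (fun τ => T n β k g (fun x => f x ^ 2) τ - (T n β k g f τ) ^ 2) ≤ (c * amax) ^ 2 := by
      apply Ef_le_of_le n hn β k g σ t
      intro τ
      apply onestep_var n hn β k g f τ (c * amax)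
      intro v b
      calc |f (Function.update τ v b) - f τ| ≤ c * a (g v) := hf τ v b
        _ ≤ c * amax := mul_le_mul_of_nonneg_left (haM (g v)) hc
    calc Varf n β k g σ t (T n β k g f) + Ef n β k g σ t
          (fun τ => T n β k g (fun x => f x ^ 2) τ - (T n β k g f τ) ^ 2)
        ≤ (∑ s ∈ Finset.range t, (ρ ^ s * (ρ * c) * amax) ^ 2) + (c * amax) ^ 2 :=
          add_le_add h1 h2
      _ = ∑ s ∈ Finset.range (t + 1), (ρ ^ s * c * amax) ^ 2 := by
          rw [Finset.sum_range_succ']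
          congr 1
          · refine Finset.sum_congr rfl fun s _ => ?_
            rw [pow_succ]
            ring
          · rw [pow_zero]
            ring

lemma Smag_update (n : ℕ) (g : Fin n → Fin m) (σ : Fin n → Bool) (v : Fin n) (b : Bool)
    (i : Fin m) : Smag n g (Function.update σ v b) i - Smag n g σ i
      = if g v = i then (1 / n) * (spin b - spin (σ v)) else 0 := by
  unfold Smag
  rw [← mul_sub, ← Finset.sum_sub_distrib]
  by_cases h : g v = i
  · rw [if_pos h,
      Finset.sum_eq_single_of_mem v (by simp [h]) (fun u _ huv => by
        rw [Function.update_of_ne huv, sub_self]),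
      Function.update_self]
  · rw [if_neg h, Finset.sum_eq_zero, mul_zero]
    intro u hu
    have huv : u ≠ v := fun e => h (by rw [← e]; exact (Finset.mem_filter.mp hu).2)
    rw [Function.update_of_ne huv, sub_self]

lemma abs_Smag_update_le (n : ℕ) (g : Fin n → Fin m) (σ : Fin n → Bool) (v : Fin n) (b : Bool)
    (i : Fin m) : |Smag n g (Function.update σ v b) i - Smag n g σ i|
      ≤ if g v = i then 2 / (n:ℝ) else 0 := by
  rw [Smag_update]
  by_cases h : g v = i
  · rw [if_pos h, if_pos h, abs_mul, abs_of_nonneg (by positivity : (0:ℝ) ≤ 1 / (n:ℝ))]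
    calc (1 / (n:ℝ)) * |spin b - spin (σ v)| ≤ (1 / (n:ℝ)) * 2 :=
        mul_le_mul_of_nonneg_left (spin_diff_le _ _) (by positivity)
      _ = 2 / n := by ring
  · rw [if_neg h, if_neg h, abs_zero]

lemma lip_Smag (n : ℕ) (g : Fin n → Fin m) (a : Fin m → ℝ) (amin : ℝ)
    (hamin0 : 0 < amin) (ham : ∀ i, amin ≤ a i) (i : Fin m) :
    LipA n g a (fun τ => Smag n g τ i) (2 / ((n:ℝ) * amin)) := by
  intro σ v b
  refine (abs_Smag_update_le n g σ v b i).trans ?_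
  have ha := ham (g v)
  by_cases h : g v = i
  · rw [if_pos h]
    rcases Nat.eq_zero_or_pos n with hn | hn
    · subst hn; norm_num
    have hn' : (0:ℝ) < n := by exact_mod_cast hn
    rw [div_mul_eq_mul_div, div_le_div_iff₀ hn' (by positivity)]
    nlinarith
  · rw [if_neg h]
    exact mul_nonneg (div_nonneg (by norm_num)
      (mul_nonneg (Nat.cast_nonneg n) hamin0.le)) (hamin0.trans_le ha).le

lemma lip_l1 (n : ℕ) (g : Fin n → Fin m) (a : Fin m → ℝ) (amin : ℝ)
    (hamin0 : 0 < amin) (ham : ∀ i, amin ≤ a i) :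
    LipA n g a (fun τ => ∑ i, |Smag n g τ i|) (2 / ((n:ℝ) * amin)) := by
  intro σ v b
  simp only
  have h1 : abs ((∑ i, |Smag n g (Function.update σ v b) i|) - ∑ i, |Smag n g σ i|)
      ≤ ∑ i, |Smag n g (Function.update σ v b) i - Smag n g σ i| := by
    rw [← Finset.sum_sub_distrib]
    refine (Finset.abs_sum_le_sum_abs _ _).trans (Finset.sum_le_sum fun i _ => ?_)
    exact abs_abs_sub_abs_le_abs_sub _ _
  refine h1.trans ?_
  have h2 : ∑ i, |Smag n g (Function.update σ v b) i - Smag n g σ i|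
      ≤ ∑ i, if g v = i then 2 / (n:ℝ) else 0 :=
    Finset.sum_le_sum fun i _ => abs_Smag_update_le n g σ v b i
  refine h2.trans ?_
  rw [Finset.sum_ite_eq Finset.univ (g v) (fun _ => 2 / (n:ℝ)), if_pos (Finset.mem_univ _)]
  have ha := ham (g v)
  rcases Nat.eq_zero_or_pos n with hn | hn
  · subst hn; norm_num
  have hn' : (0:ℝ) < n := by exact_mod_cast hn
  rw [div_mul_eq_mul_div, div_le_div_iff₀ hn' (by positivity)]
  nlinarith

set_option maxHeartbeats 1000000

/-- variance bounds for the block magnetization chain: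
if `β < β_cr` then `∑ i Var_s(S_t^{(i)}) ≤ 8αm a_max²/(a_min² n)` and
`Var_s(‖S_t‖₁) ≤ 8αm² a_max²/(a_min² n)`; if `β = β_cr` then
`Var_s(‖S_t‖₁) ≤ 4m² a_max² t/(a_min² n²)`. -/
theorem magnetization_variance_bounds
    (m : ℕ) (p : Fin m → ℝ) (k : Fin m → Fin m → ℝ) (a : Fin m → ℝ)
    (hP : Params m p k) (ha : PFvec m p k a)
    (amax amin : ℝ)
    (hamax : IsGreatest (Set.range a) amax) (hamin : IsLeast (Set.range a) amin)
    (β : ℝ) (hβ0 : 0 ≤ β)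
    (α : ℝ) (hα : α = 1 / (2 * (1 - β / betaCr p k a)))
    (n : ℕ) (hn : 0 < n) (g : Fin n → Fin m) (hg : IsPartition n p g) :
    -- (i) high temperature
    (β < betaCr p k a →
      ∀ σ : Fin n → Bool, ∀ t : ℕ,
        (∑ i, Varf n β k g σ t (fun τ => Smag n g τ i)) ≤
          8 * α * m * amax ^ 2 / (amin ^ 2 * n) ∧
        Varf n β k g σ t (fun τ => ∑ i, |Smag n g τ i|) ≤
          8 * α * m ^ 2 * amax ^ 2 / (amin ^ 2 * n)) ∧
    -- (ii) critical temperature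
    (β = betaCr p k a →
      ∀ σ : Fin n → Bool, ∀ t : ℕ,
        Varf n β k g σ t (fun τ => ∑ i, |Smag n g τ i|) ≤
          4 * m ^ 2 * amax ^ 2 * t / (amin ^ 2 * n ^ 2)) := by
  classical
  set lam : ℝ := ∑ i, ∑ j, a i * (p i * k i j) with hlamdef
  have hmne : (Finset.univ : Finset (Fin m)).Nonempty := ⟨⟨0, hP.hm⟩, Finset.mem_univ _⟩
  have hlampos : 0 < lam := by
    refine Finset.sum_pos (fun i _ => ?_) hmne
    exact Finset.sum_pos (fun j _ =>
      mul_pos (ha.hpos i) (mul_pos (hP.hp i) (hP.hkpos i j))) hmne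
  have hbc : betaCr p k a = 1 / lam := rfl
  have heig' : ∀ j, ∑ i, a i * (p i * k i j) = lam * a j := ha.heig
  have hn' : (0:ℝ) < n := by exact_mod_cast hn
  have hn1 : (1:ℝ) ≤ n := by exact_mod_cast hn
  have hvar := var_iter n hn β hβ0 p k a g lam hP.hkpos ha.hpos hlampos.le hg.2 heig' amax
    (fun i => hamax.2 (Set.mem_range_self i))
  clear_value lam
  clear hlamdef
  have haM : ∀ i, a i ≤ amax := fun i => hamax.2 (Set.mem_range_self i)
  obtain ⟨i0, hi0⟩ := hamin.1
  have hamin0 : 0 < amin := hi0 ▸ ha.hpos i0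
  have ham : ∀ i, amin ≤ a i := fun i => hamin.2 (Set.mem_range_self i)
  have hamax0 : 0 < amax := lt_of_lt_of_le hamin0 (hi0 ▸ haM i0)
  set c : ℝ := 2 / ((n:ℝ) * amin) with hcdef
  have hc0 : 0 ≤ c := by
    rw [hcdef]
    exact div_nonneg (by norm_num) (mul_nonneg hn'.le hamin0.le)
  set ρ : ℝ := ((n:ℝ) - 1 + β * lam) / n with hρdef
  clear_value ρ c
  have hm1 : (1:ℝ) ≤ m := by exact_mod_cast hP.hm
  have hden : (0:ℝ) < amin ^ 2 * n := mul_pos (pow_pos hamin0 2) hn'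
  constructor
  · intro hβcr σ t
    have hβlam : β * lam < 1 := by
      rw [hbc, lt_div_iff₀ hlampos] at hβcr
      linarith
    have hρ0 : 0 ≤ ρ := by
      rw [hρdef]
      exact div_nonneg (by nlinarith [mul_nonneg hβ0 hlampos.le]) hn'.le
    have hρ1 : ρ < 1 := by rw [hρdef, div_lt_one hn']; linarith
    have hr2 : ρ ^ 2 < 1 := by nlinarith
    have hgeom : ∀ t' : ℕ, ∑ s ∈ Finset.range t', (ρ ^ s * c * amax) ^ 2
        ≤ (c * amax) ^ 2 * ((n:ℝ) / (1 - β * lam)) := by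
      intro t'
      have h1 : ∀ s : ℕ, (ρ ^ s * c * amax) ^ 2 = (c * amax) ^ 2 * (ρ ^ 2) ^ s := by
        intro s
        rw [show (ρ ^ s * c * amax) ^ 2 = (ρ ^ s) ^ 2 * (c * amax) ^ 2 by ring,
          ← pow_mul, mul_comm s 2, pow_mul]
        ring
      simp only [h1]
      rw [← Finset.mul_sum]
      refine mul_le_mul_of_nonneg_left ?_ (sq_nonneg _)
      have hsum : ∑ s ∈ Finset.range t', (ρ ^ 2) ^ s ≤ 1 / (1 - ρ ^ 2) := by
        rw [geom_sum_eq (by nlinarith : ρ ^ 2 ≠ 1)]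
        have heq : ((ρ ^ 2) ^ t' - 1) / (ρ ^ 2 - 1) = (1 - (ρ ^ 2) ^ t') / (1 - ρ ^ 2) := by
          rw [← neg_div_neg_eq]
          ring_nf
        rw [heq, div_le_div_iff₀ (by nlinarith) (by nlinarith)]
        nlinarith [pow_nonneg (sq_nonneg ρ) t']
      refine hsum.trans ?_
      have e1 : 1 - ρ = (1 - β * lam) / n := by
        rw [hρdef]
        field_simp
        ring
      have h2 : (1 - β * lam) / (n:ℝ) ≤ 1 - ρ ^ 2 := by nlinarith
      calc (1:ℝ) / (1 - ρ ^ 2) ≤ 1 / ((1 - β * lam) / n) :=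
          one_div_le_one_div_of_le (div_pos (by linarith) hn') h2
        _ = (n:ℝ) / (1 - β * lam) := by rw [one_div_div]
    have hαval : α = 1 / (2 * (1 - β * lam)) := by
      have hb : β / (1 / lam) = β * lam := by
        field_simp
      rw [hα, hbc, hb]
    have hα0 : 0 ≤ α := by
      rw [hαval]
      have h20 : (0:ℝ) < 2 * (1 - β * lam) := by nlinarith
      exact (one_div_pos.mpr h20).le
    have hkey : (c * amax) ^ 2 * ((n:ℝ) / (1 - β * lam)) = 8 * α * amax ^ 2 / (amin ^ 2 * n) := by
      have h1 : (1:ℝ) - β * lam ≠ 0 := by nlinarith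
      have h2 : amin ≠ 0 := hamin0.ne'
      have h3 : (n:ℝ) ≠ 0 := hn'.ne'
      rw [hαval, hcdef]
      field_simp
      ring
    have hvb : ∀ f : (Fin n → Bool) → ℝ, LipA n g a f c →
        Varf n β k g σ t f ≤ (c * amax) ^ 2 * ((n:ℝ) / (1 - β * lam)) := by
      intro f hf
      have h := hvar t σ f c hc0 hf
      exact h.trans (hgeom t)
    refine ⟨?_, ?_⟩
    · calc ∑ i, Varf n β k g σ t (fun τ => Smag n g τ i)
          ≤ ∑ _i : Fin m, (c * amax) ^ 2 * ((n:ℝ) / (1 - β * lam)) :=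
            Finset.sum_le_sum fun i _ =>
              hvb _ (by rw [hcdef]; exact lip_Smag n g a amin hamin0 ham i)
        _ = m * ((c * amax) ^ 2 * ((n:ℝ) / (1 - β * lam))) := by
            rw [Finset.sum_const, Finset.card_univ, Fintype.card_fin, nsmul_eq_mul]
        _ = 8 * α * m * amax ^ 2 / (amin ^ 2 * n) := by
            rw [hkey]
            ring
    · have h := hvb _ (by rw [hcdef]; exact lip_l1 n g a amin hamin0 ham)
      rw [hkey] at h
      refine h.trans ?_
      rw [div_le_div_iff₀ hden hden]
      have hm2 : (1:ℝ) ≤ (m:ℝ) ^ 2 := by nlinarith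
      have hX : (0:ℝ) ≤ 8 * α * amax ^ 2 * (amin ^ 2 * (n:ℝ)) :=
        mul_nonneg (mul_nonneg (by linarith) (sq_nonneg amax)) hden.le
      nlinarith [mul_le_mul_of_nonneg_right hm2 hX]
  · intro hβcr σ t
    have hβlam : β * lam = 1 := by
      rw [hβcr, hbc]
      field_simp
    have hρeq : ρ = 1 := by
      rw [hρdef, hβlam]
      field_simp
      ring
    have h := hvar t σ _ c hc0 (by rw [hcdef]; exact lip_l1 n g a amin hamin0 ham)
    rw [hρeq] at h
    simp only [one_pow, one_mul] at h
    rw [Finset.sum_const, Finset.card_range, nsmul_eq_mul] at h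
    refine h.trans ?_
    have hexp : (t:ℝ) * (c * amax) ^ 2 = 4 * amax ^ 2 * t / (amin ^ 2 * n ^ 2) := by
      rw [hcdef]
      field_simp
      ring
    rw [hexp]
    have hden2 : (0:ℝ) < amin ^ 2 * (n:ℝ) ^ 2 := mul_pos (pow_pos hamin0 2) (by positivity)
    rw [div_le_div_iff₀ hden2 hden2]
    have hm2 : (1:ℝ) ≤ (m:ℝ) ^ 2 := by nlinarith
    have hX : (0:ℝ) ≤ 4 * amax ^ 2 * (t:ℝ) * (amin ^ 2 * (n:ℝ) ^ 2) := by positivity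
    nlinarith [mul_le_mul_of_nonneg_right hm2 hX]

end MultiIsing
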